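/- Let N ≥ 1 and let V, Q : ℝ^N → ℝ be continuous and 1-periodic in each coordinate, with Q continuously differentiable, inf Q > 0 and inf (V+Q) > 0. Then the Nehari set 𝒩 is bounded away from 0: there exists ρ > 0 such that every u ∈ 𝒩 satisfies (∫(|∇u|² + (V+Q)u²) dx)^{1/2} ≥ ρ. -/

import Mathlib

open MeasureTheory Real

noncomputable section

abbrev Euc (N : ℕ) := EuclideanSpace ℝ (Fin N)

def intVec {N : ℕ} (k : Fin N → ℤ) : Euc N := WithLp.toLp 2 (fun i => (k i : ℝ))

/-- Membership in the Nehari set `𝒩`. -/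
def InNehari {N : ℕ} (V Q u : Euc N → ℝ) : Prop :=
  ContDiff ℝ 1 u ∧ u ≠ 0 ∧
  Integrable (fun x => (u x) ^ 2 + ‖gradient u x‖ ^ 2) volume ∧
  Integrable (fun x => (u x) ^ 2 * Real.log ((u x) ^ 2)) volume ∧
  (∫ x, (‖gradient u x‖ ^ 2 + V x * (u x) ^ 2)) =
    ∫ x, Q x * (u x) ^ 2 * Real.log ((u x) ^ 2)


open scoped ENNReal NNReal

set_option maxHeartbeats 1000000

lemma norm_gradient_eq {N : ℕ} (u : Euc N → ℝ) (x : Euc N) :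
    ‖gradient u x‖ = ‖fderiv ℝ u x‖ := by
  rw [gradient]
  exact LinearIsometryEquiv.norm_map _ _

lemma periodic_bound {N : ℕ} (f : Euc N → ℝ) (hf : Continuous f)
    (hper : ∀ (x : Euc N) (k : Fin N → ℤ), f (x + intVec k) = f x) :
    ∃ M : ℝ, ∀ x, |f x| ≤ M := by
  set e := (EuclideanSpace.equiv (Fin N) ℝ).toHomeomorph
  set K : Set (Euc N) := e.symm '' (Set.univ.pi fun _ => Set.Icc (0:ℝ) 1) with hK
  have hKc : IsCompact K :=
    ((isCompact_univ_pi fun _ => isCompact_Icc).image e.symm.continuous)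
  obtain ⟨M, hM⟩ := hKc.exists_bound_of_continuousOn hf.continuousOn
  refine ⟨M, fun x => ?_⟩
  set k : Fin N → ℤ := fun i => ⌊x i⌋ with hk
  have h1 : f x = f (x - intVec k) := by
    rw [← hper (x - intVec k) k, sub_add_cancel]
  rw [h1]
  apply hM
  refine ⟨x - intVec k, ?_, ?_⟩
  · intro i _
    have : (x.ofLp - (intVec k).ofLp) i = x i - (⌊x i⌋ : ℝ) := by simp [intVec, k]
    rw [this]
    constructor
    · linarith [Int.floor_le (x i)]
    · linarith [Int.lt_floor_add_one (x i)]
  · rfl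

lemma t_log_le {α : ℝ} (hα : 0 < α) (t : ℝ) (ht : 0 ≤ t) :
    t * (Real.log t + 1) ≤ (Real.exp α / α) * t ^ (1 + α) := by
  rcases ht.eq_or_lt with h | h
  · simp [← h, Real.rpow_eq_zero_iff_of_nonneg]
    rw [Real.zero_rpow (by positivity)]
    simp
  · have h1 : Real.log t + 1 = Real.log (Real.exp 1 * t) := by
      rw [Real.log_mul (Real.exp_ne_zero 1) h.ne', Real.log_exp]; ring
    have h2 : Real.log (Real.exp 1 * t) ≤ (Real.exp 1 * t) ^ α / α := by
      have h3 : 0 < Real.exp 1 * t := by positivity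
      have h4 := Real.log_le_sub_one_of_pos (Real.rpow_pos_of_pos h3 α)
      rw [Real.log_rpow h3] at h4
      rw [le_div_iff₀ hα]
      nlinarith
    have h5 : (Real.exp 1 * t) ^ α = Real.exp α * t ^ α := by
      rw [Real.mul_rpow (Real.exp_pos 1).le ht, Real.exp_one_rpow α]
    calc t * (Real.log t + 1) ≤ t * ((Real.exp 1 * t) ^ α / α) := by
          rw [h1]; exact mul_le_mul_of_nonneg_left h2 ht
      _ = (Real.exp α / α) * t ^ (1 + α) := by
          rw [h5, Real.rpow_add h, Real.rpow_one]; ring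

lemma sobolev_tensor (N : ℕ) (hN : 1 ≤ N) :
    ∃ C : ℝ≥0∞, C ≠ ∞ ∧ ∀ v : Euc N → ℝ, ContDiff ℝ 1 v → HasCompactSupport v →
      (∫⁻ x, (‖v x‖₊ : ℝ≥0∞) ^ ((N+1:ℝ)/N)) ≤
        C * ((∫⁻ x, (‖fderiv ℝ v x‖₊ : ℝ≥0∞)) + ∫⁻ x, (‖v x‖₊ : ℝ≥0∞)) ^ ((N+1:ℝ)/N) := by
  haveI : (volume : Measure (Euc N × ℝ)).IsAddHaarMeasure := by
    rw [Measure.volume_eq_prod]; infer_instance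
  set p : ℝ := (N+1)/N with hpdef
  have hN0 : (0:ℝ) < N := by exact_mod_cast hN
  have hp1 : 1 ≤ p := by rw [hpdef, le_div_iff₀ hN0]; push_cast; linarith
  have hp0 : (0:ℝ) < p := lt_of_lt_of_le one_pos hp1
  set gb : ContDiffBump (0:ℝ) := ⟨1, 2, one_pos, one_lt_two⟩ with hgbdef
  have hgbc : Continuous gb := gb.continuous
  have hgd : ContDiff ℝ 1 (gb : ℝ → ℝ) := gb.contDiff
  have hgdc : Continuous (deriv (gb : ℝ → ℝ)) := hgd.continuous_deriv le_rfl
  set A := ∫⁻ y, (‖gb y‖₊ : ℝ≥0∞) with hA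
  set B := ∫⁻ y, (‖deriv (gb : ℝ → ℝ) y‖₊ : ℝ≥0∞) with hB
  set G2 := ∫⁻ y, (‖gb y‖₊ : ℝ≥0∞) ^ p with hG2
  have hAfin : A < ∞ :=
    (hgbc.integrable_of_hasCompactSupport gb.hasCompactSupport).hasFiniteIntegral
  have hBfin : B < ∞ :=
    (hgdc.integrable_of_hasCompactSupport gb.hasCompactSupport.deriv).hasFiniteIntegral
  have h01 : ∀ y : ℝ, (‖gb y‖₊ : ℝ≥0∞) ≤ 1 := by
    intro y
    rw [← ENNReal.coe_one, ENNReal.coe_le_coe, ← NNReal.coe_le_coe, coe_nnnorm,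
      Real.norm_eq_abs, NNReal.coe_one, abs_le]
    exact ⟨by linarith [gb.nonneg' y], gb.le_one⟩
  have hG2A : G2 ≤ A := lintegral_mono fun y =>
    by simpa using ENNReal.rpow_le_rpow_of_exponent_ge (h01 y) hp1
  have hG2fin : G2 < ∞ := lt_of_le_of_lt hG2A hAfin
  have hG2pos : G2 ≠ 0 := by
    have h1 : (volume (Metric.closedBall (0:ℝ) 1)) ≤ G2 := by
      have : ∫⁻ y in Metric.closedBall (0:ℝ) 1, (‖gb y‖₊ : ℝ≥0∞) ^ p = volume (Metric.closedBall (0:ℝ) 1) := by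
        rw [setLIntegral_congr_fun measurableSet_closedBall
          (fun y hy => ?_), setLIntegral_one]
        have : gb y = 1 := gb.one_of_mem_closedBall hy
        rw [this]; simp
      rw [← this]
      exact setLIntegral_le_lintegral _ _
    intro h0
    rw [h0] at h1
    simp [Real.volume_closedBall] at h1
  -- the constant
  set C₀ : ℝ≥0∞ := (lintegralPowLePowLIntegralFDerivConst (volume : Measure (Euc N × ℝ)) p : ℝ≥0∞) with hC₀
  set D := max A B 
  have hDfin : D ≠ ∞ := by simp [D, hAfin.ne, hBfin.ne]
  refine ⟨C₀ * D ^ p / G2, ?_, ?_⟩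
  · exact (ENNReal.div_lt_top (ENNReal.mul_ne_top ENNReal.coe_ne_top
      (ENNReal.rpow_ne_top_of_nonneg hp0.le hDfin)) hG2pos).ne
  intro v hv hvs
  set w : Euc N × ℝ → ℝ := fun z => v z.1 * gb z.2 with hwdef
  have hw : ContDiff ℝ 1 w := (hv.comp contDiff_fst).mul (hgd.comp contDiff_snd)
  have hws : HasCompactSupport w := by
    apply HasCompactSupport.intro (hvs.prod gb.hasCompactSupport)
    intro z hz
    rw [Set.mem_prod] at hz
    push_neg at hz
    by_cases h1 : z.1 ∈ tsupport v
    · have := image_eq_zero_of_notMem_tsupport (hz h1)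
      simp [hwdef, this]
    · have := image_eq_zero_of_notMem_tsupport h1
      simp [hwdef, this]
  have hconj : Real.HolderConjugate (Module.finrank ℝ (Euc N × ℝ)) p := by
    have hfrn : Module.finrank ℝ (Euc N × ℝ) = N + 1 := by simp
    rw [Real.holderConjugate_iff]
    constructor
    · rw [hfrn]; push_cast; linarith
    · rw [hfrn, hpdef]
      push_cast
      rw [inv_div]
      field_simp
      ring
  have key := lintegral_pow_le_pow_lintegral_fderiv (volume : Measure (Euc N × ℝ)) hw hws hconj
  -- factor the LHS
  have hvmeas : Measurable fun x : Euc N => (‖v x‖₊ : ℝ≥0∞) ^ p :=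
    hv.continuous.measurable.nnnorm.coe_nnreal_ennreal.pow_const _
  have hgmeas : Measurable fun y : ℝ => (‖gb y‖₊ : ℝ≥0∞) ^ p :=
    hgbc.measurable.nnnorm.coe_nnreal_ennreal.pow_const _
  have hLHS : ∫⁻ z : Euc N × ℝ, (‖w z‖₊ : ℝ≥0∞) ^ p
      = (∫⁻ x, (‖v x‖₊ : ℝ≥0∞) ^ p) * G2 := by
    have : ∀ z : Euc N × ℝ, (‖w z‖₊ : ℝ≥0∞) ^ p
        = ((‖v z.1‖₊ : ℝ≥0∞) ^ p) * ((‖gb z.2‖₊ : ℝ≥0∞) ^ p) := by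
      intro z
      rw [hwdef]
      simp only [nnnorm_mul, ENNReal.coe_mul]
      rw [ENNReal.mul_rpow_of_nonneg _ _ hp0.le]
    simp_rw [this]
    rw [Measure.volume_eq_prod, lintegral_prod_mul hvmeas.aemeasurable hgmeas.aemeasurable]
  -- bound the derivative integral
  have hptw : ∀ z : Euc N × ℝ, (‖fderiv ℝ w z‖₊ : ℝ≥0∞) ≤
      (‖fderiv ℝ v z.1‖₊ : ℝ≥0∞) * (‖gb z.2‖₊ : ℝ≥0∞)
        + (‖v z.1‖₊ : ℝ≥0∞) * (‖deriv (gb : ℝ → ℝ) z.2‖₊ : ℝ≥0∞) := by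
    intro z
    have hd1 : DifferentiableAt ℝ (fun z : Euc N × ℝ => v z.1) z :=
      ((hv.differentiable one_ne_zero) z.1).comp z differentiableAt_fst
    have hd2 : DifferentiableAt ℝ (fun z : Euc N × ℝ => gb z.2) z :=
      ((hgd.differentiable one_ne_zero) z.2).comp z differentiableAt_snd
    have hmul : fderiv ℝ w z = v z.1 • fderiv ℝ (fun z : Euc N × ℝ => gb z.2) z
        + gb z.2 • fderiv ℝ (fun z : Euc N × ℝ => v z.1) z := fderiv_mul hd1 hd2
    have hn1 : ‖fderiv ℝ (fun z : Euc N × ℝ => v z.1) z‖ ≤ ‖fderiv ℝ v z.1‖ := by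
      have : fderiv ℝ (fun z : Euc N × ℝ => v z.1) z
          = (fderiv ℝ v z.1).comp (ContinuousLinearMap.fst ℝ (Euc N) ℝ) := by
        rw [show (fun z : Euc N × ℝ => v z.1) = v ∘ Prod.fst from rfl,
          fderiv_comp z ((hv.differentiable one_ne_zero) z.1) differentiableAt_fst, fderiv_fst]
      rw [this]
      calc ‖(fderiv ℝ v z.1).comp (ContinuousLinearMap.fst ℝ (Euc N) ℝ)‖
          ≤ ‖fderiv ℝ v z.1‖ * ‖ContinuousLinearMap.fst ℝ (Euc N) ℝ‖ :=
            ContinuousLinearMap.opNorm_comp_le _ _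
        _ ≤ ‖fderiv ℝ v z.1‖ * 1 := by
            gcongr; exact ContinuousLinearMap.norm_fst_le ℝ (Euc N) ℝ
        _ = ‖fderiv ℝ v z.1‖ := mul_one _
    have hn2 : ‖fderiv ℝ (fun z : Euc N × ℝ => gb z.2) z‖ ≤ ‖deriv (gb : ℝ → ℝ) z.2‖ := by
      have : fderiv ℝ (fun z : Euc N × ℝ => gb z.2) z
          = (fderiv ℝ (gb : ℝ → ℝ) z.2).comp (ContinuousLinearMap.snd ℝ (Euc N) ℝ) := by
        rw [show (fun z : Euc N × ℝ => gb z.2) = (gb : ℝ → ℝ) ∘ Prod.snd from rfl,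
          fderiv_comp z ((hgd.differentiable one_ne_zero) z.2) differentiableAt_snd, fderiv_snd]
      rw [this, norm_deriv_eq_norm_fderiv]
      calc ‖(fderiv ℝ (gb : ℝ → ℝ) z.2).comp (ContinuousLinearMap.snd ℝ (Euc N) ℝ)‖
          ≤ ‖fderiv ℝ (gb : ℝ → ℝ) z.2‖ * ‖ContinuousLinearMap.snd ℝ (Euc N) ℝ‖ :=
            ContinuousLinearMap.opNorm_comp_le _ _
        _ ≤ ‖fderiv ℝ (gb : ℝ → ℝ) z.2‖ * 1 := by
            gcongr; exact ContinuousLinearMap.norm_snd_le ℝ (Euc N) ℝ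
        _ = _ := mul_one _
    have hreal : ‖fderiv ℝ w z‖ ≤ ‖fderiv ℝ v z.1‖ * ‖gb z.2‖
        + ‖v z.1‖ * ‖deriv (gb : ℝ → ℝ) z.2‖ := by
      rw [hmul]
      calc ‖v z.1 • fderiv ℝ (fun z : Euc N × ℝ => gb z.2) z
            + gb z.2 • fderiv ℝ (fun z : Euc N × ℝ => v z.1) z‖
          ≤ ‖v z.1‖ * ‖fderiv ℝ (fun z : Euc N × ℝ => gb z.2) z‖
            + ‖gb z.2‖ * ‖fderiv ℝ (fun z : Euc N × ℝ => v z.1) z‖ := by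
            refine (norm_add_le _ _).trans ?_
            rw [norm_smul, norm_smul]
        _ ≤ ‖v z.1‖ * ‖deriv (gb : ℝ → ℝ) z.2‖ + ‖gb z.2‖ * ‖fderiv ℝ v z.1‖ := by
            exact add_le_add (mul_le_mul_of_nonneg_left hn2 (norm_nonneg _))
              (mul_le_mul_of_nonneg_left hn1 (norm_nonneg _))
        _ = ‖fderiv ℝ v z.1‖ * ‖gb z.2‖ + ‖v z.1‖ * ‖deriv (gb : ℝ → ℝ) z.2‖ := by ring
    calc (‖fderiv ℝ w z‖₊ : ℝ≥0∞)
        = ENNReal.ofReal ‖fderiv ℝ w z‖ := (ofReal_norm _).symm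
      _ ≤ ENNReal.ofReal (‖fderiv ℝ v z.1‖ * ‖gb z.2‖ + ‖v z.1‖ * ‖deriv (gb : ℝ → ℝ) z.2‖) :=
          ENNReal.ofReal_le_ofReal hreal
      _ ≤ _ := by
          rw [ENNReal.ofReal_add (by positivity) (by positivity),
            ENNReal.ofReal_mul (norm_nonneg _), ENNReal.ofReal_mul (norm_nonneg _)]
          simp only [ofReal_norm]; exact le_rfl
  have hRHS : (∫⁻ z : Euc N × ℝ, (‖fderiv ℝ w z‖₊ : ℝ≥0∞)) ≤
      ((∫⁻ x, (‖fderiv ℝ v x‖₊ : ℝ≥0∞)) + ∫⁻ x, (‖v x‖₊ : ℝ≥0∞)) * D := by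
    have hfv : Measurable fun x : Euc N => (‖fderiv ℝ v x‖₊ : ℝ≥0∞) :=
      (hv.continuous_fderiv one_ne_zero).measurable.nnnorm.coe_nnreal_ennreal
    have hvm : Measurable fun x : Euc N => (‖v x‖₊ : ℝ≥0∞) :=
      hv.continuous.measurable.nnnorm.coe_nnreal_ennreal
    have hgm : Measurable fun y : ℝ => (‖gb y‖₊ : ℝ≥0∞) := hgbc.measurable.nnnorm.coe_nnreal_ennreal
    have hgm' : Measurable fun y : ℝ => (‖deriv (gb : ℝ → ℝ) y‖₊ : ℝ≥0∞) :=
      hgdc.measurable.nnnorm.coe_nnreal_ennreal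
    calc (∫⁻ z : Euc N × ℝ, (‖fderiv ℝ w z‖₊ : ℝ≥0∞))
        ≤ ∫⁻ z : Euc N × ℝ, ((‖fderiv ℝ v z.1‖₊ : ℝ≥0∞) * (‖gb z.2‖₊ : ℝ≥0∞)
            + (‖v z.1‖₊ : ℝ≥0∞) * (‖deriv (gb : ℝ → ℝ) z.2‖₊ : ℝ≥0∞)) := lintegral_mono hptw
      _ = (∫⁻ x, (‖fderiv ℝ v x‖₊ : ℝ≥0∞)) * A + (∫⁻ x, (‖v x‖₊ : ℝ≥0∞)) * B := by
          rw [Measure.volume_eq_prod, lintegral_add_left]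
          · rw [lintegral_prod_mul hfv.aemeasurable hgm.aemeasurable,
              lintegral_prod_mul hvm.aemeasurable hgm'.aemeasurable]
          · exact (hfv.comp measurable_fst).mul (hgm.comp measurable_snd)
      _ ≤ (∫⁻ x, (‖fderiv ℝ v x‖₊ : ℝ≥0∞)) * D + (∫⁻ x, (‖v x‖₊ : ℝ≥0∞)) * D := by
          gcongr <;> simp [D]
      _ = _ := by rw [add_mul]
  -- combine
  have hfinal : (∫⁻ x, (‖v x‖₊ : ℝ≥0∞) ^ p) * G2 ≤
      C₀ * D ^ p * ((∫⁻ x, (‖fderiv ℝ v x‖₊ : ℝ≥0∞)) + ∫⁻ x, (‖v x‖₊ : ℝ≥0∞)) ^ p := by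
    rw [← hLHS]
    refine key.trans ?_
    calc (C₀ : ℝ≥0∞) * (∫⁻ z : Euc N × ℝ, (‖fderiv ℝ w z‖₊ : ℝ≥0∞)) ^ p
        ≤ C₀ * (((∫⁻ x, (‖fderiv ℝ v x‖₊ : ℝ≥0∞)) + ∫⁻ x, (‖v x‖₊ : ℝ≥0∞)) * D) ^ p := by
          gcongr
      _ = C₀ * D ^ p * ((∫⁻ x, (‖fderiv ℝ v x‖₊ : ℝ≥0∞)) + ∫⁻ x, (‖v x‖₊ : ℝ≥0∞)) ^ p := by
          rw [ENNReal.mul_rpow_of_nonneg _ _ hp0.le]; ring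
  have hrw : C₀ * D ^ p / G2 * ((∫⁻ x, (‖fderiv ℝ v x‖₊ : ℝ≥0∞)) + ∫⁻ x, (‖v x‖₊ : ℝ≥0∞)) ^ p
      = C₀ * D ^ p * ((∫⁻ x, (‖fderiv ℝ v x‖₊ : ℝ≥0∞)) + ∫⁻ x, (‖v x‖₊ : ℝ≥0∞)) ^ p / G2 := by
    rw [div_eq_mul_inv, div_eq_mul_inv]; ring
  rw [hrw, ENNReal.le_div_iff_mul_le (Or.inl hG2pos) (Or.inl hG2fin.ne)]
  exact hfinal

lemma sobolev_noncompact (N : ℕ) (hN : 1 ≤ N) :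
    ∃ C : ℝ≥0∞, C ≠ ∞ ∧ ∀ u : Euc N → ℝ, ContDiff ℝ 1 u →
      Integrable (fun x => u x ^ 2 + ‖fderiv ℝ u x‖ ^ 2) volume →
      (∫⁻ x, (ENNReal.ofReal (u x ^ 2)) ^ ((N+1:ℝ)/N)) ≤
        C * (ENNReal.ofReal (∫ x, (u x ^ 2 + ‖fderiv ℝ u x‖ ^ 2))) ^ ((N+1:ℝ)/N) := by
  obtain ⟨C0, hC0fin, hC0⟩ := sobolev_tensor N hN
  set p : ℝ := (N+1)/N with hpdef
  have hN0 : (0:ℝ) < N := by exact_mod_cast hN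
  have hp0 : (0:ℝ) < p := by positivity
  set χ : ContDiffBump (0 : Euc N) := ⟨1, 2, one_pos, one_lt_two⟩ with hχdef
  have hχc1 : ContDiff ℝ 1 (χ : Euc N → ℝ) := χ.contDiff
  obtain ⟨K, hK⟩ := (χ.hasCompactSupport.fderiv (𝕜 := ℝ)).exists_bound_of_continuous
    (hχc1.continuous_fderiv one_ne_zero)
  set K' : ℝ := max K 0 with hK'def
  have hK'0 : 0 ≤ K' := le_max_right _ _
  have hK' : ∀ y, ‖fderiv ℝ (χ : Euc N → ℝ) y‖ ≤ K' := fun y => (hK y).trans (le_max_left _ _)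
  refine ⟨C0 * (ENNReal.ofReal (2 + K')) ^ p, ENNReal.mul_ne_top hC0fin
    (ENNReal.rpow_ne_top_of_nonneg hp0.le ENNReal.ofReal_ne_top), ?_⟩
  intro u hu hint
  set s : ℝ := ∫ x, (u x ^ 2 + ‖fderiv ℝ u x‖ ^ 2) with hsdef
  have hs0 : 0 ≤ s := integral_nonneg fun x => by positivity
  have hbase : ∫⁻ x, ENNReal.ofReal (u x ^ 2 + ‖fderiv ℝ u x‖ ^ 2) = ENNReal.ofReal s :=
    (ofReal_integral_eq_lintegral_ofReal hint (Filter.Eventually.of_forall fun x => by positivity)).symm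
  set f : Euc N → ℝ≥0∞ := fun x => (ENNReal.ofReal (u x ^ 2)) ^ p with hfdef
  have hfmeas : Measurable f :=
    ((hu.continuous.pow 2).measurable.ennreal_ofReal).pow_const _
  -- bound on each ball
  have hball : ∀ n : ℕ, (∫⁻ x in Metric.ball (0 : Euc N) n, f x) ≤
      C0 * (ENNReal.ofReal (2 + K') * ENNReal.ofReal s) ^ p := by
    intro n
    rcases Nat.eq_zero_or_pos n with hn0 | hn1
    · subst hn0
      simp [Metric.ball_zero]
    have hR1 : (1:ℝ) ≤ (n:ℝ) := by exact_mod_cast hn1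
    have hRpos : (0:ℝ) < n := by linarith
    set R : ℝ := (n:ℝ) with hRdef
    set χR : Euc N → ℝ := fun x => χ (R⁻¹ • x) with hχRdef
    have hχRc : ContDiff ℝ 1 χR := hχc1.comp (contDiff_const_smul _)
    have hχR01 : ∀ x, 0 ≤ χR x ∧ χR x ≤ 1 := fun x => ⟨χ.nonneg' _, χ.le_one⟩
    set v : Euc N → ℝ := fun x => χR x * u x ^ 2 with hvdef
    have hv : ContDiff ℝ 1 v := hχRc.mul (hu.pow 2)
    have hvs : HasCompactSupport v := by
      apply HasCompactSupport.intro (isCompact_closedBall (0 : Euc N) (2*R))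
      intro x hx
      have hxn : 2*R < ‖x‖ := by
        simpa [Metric.mem_closedBall, dist_zero_right, not_le] using hx
      have hns : ‖R⁻¹ • x‖ = R⁻¹ * ‖x‖ := by
        rw [norm_smul, Real.norm_eq_abs, abs_of_pos (by positivity)]
      have : χ (R⁻¹ • x) = 0 := by
        have hsupp := χ.support_eq
        by_contra h0
        have : R⁻¹ • x ∈ Function.support (χ : Euc N → ℝ) := h0
        rw [hsupp, Metric.mem_ball, dist_zero_right, hns] at this
        have h2 : χ.rOut = 2 := rfl
        rw [h2] at this
        have : ‖x‖ < 2 * R := by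
          have := (inv_mul_lt_iff₀ hRpos).mp this
          linarith
        linarith
      simp [hvdef, hχRdef, this]
    have key := hC0 v hv hvs
    -- lower bound for LHS of key
    have hlow : (∫⁻ x in Metric.ball (0 : Euc N) n, f x) ≤ ∫⁻ x, (‖v x‖₊ : ℝ≥0∞) ^ p := by
      have heq : ∀ x ∈ Metric.ball (0 : Euc N) n, f x = (‖v x‖₊ : ℝ≥0∞) ^ p := by
        intro x hx
        have hxn : ‖x‖ < R := by simpa [Metric.mem_ball, dist_zero_right] using hx
        have hmem : R⁻¹ • x ∈ Metric.closedBall (0 : Euc N) χ.rIn := by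
          have h1 : χ.rIn = 1 := rfl
          rw [h1, Metric.mem_closedBall, dist_zero_right, norm_smul, Real.norm_eq_abs,
            abs_of_pos (show (0:ℝ) < R⁻¹ by positivity)]
          rw [inv_mul_le_iff₀ hRpos]
          linarith
        have hone : χR x = 1 := χ.one_of_mem_closedBall hmem
        have hvx : v x = u x ^ 2 := by rw [hvdef]; simp [hone]
        rw [hfdef, hvx]
        congr 1
        rw [← enorm_eq_nnnorm, ← ofReal_norm, Real.norm_eq_abs, abs_of_nonneg (by positivity)]
      calc (∫⁻ x in Metric.ball (0 : Euc N) n, f x)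
          = ∫⁻ x in Metric.ball (0 : Euc N) n, (‖v x‖₊ : ℝ≥0∞) ^ p :=
            setLIntegral_congr_fun measurableSet_ball
              heq
        _ ≤ _ := setLIntegral_le_lintegral _ _
    -- upper bounds for RHS of key
    have hub1 : ∀ x, (‖v x‖₊ : ℝ≥0∞) ≤ ENNReal.ofReal (u x ^ 2 + ‖fderiv ℝ u x‖ ^ 2) := by
      intro x
      rw [← enorm_eq_nnnorm, ← ofReal_norm]
      apply ENNReal.ofReal_le_ofReal
      rw [Real.norm_eq_abs, hvdef, abs_mul, abs_of_nonneg (hχR01 x).1,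
        abs_of_nonneg (by positivity : (0:ℝ) ≤ u x ^ 2)]
      nlinarith [(hχR01 x).1, (hχR01 x).2, sq_nonneg (u x), norm_nonneg (fderiv ℝ u x)]
    have hub2 : ∀ x, (‖fderiv ℝ v x‖₊ : ℝ≥0∞) ≤
        ENNReal.ofReal ((1 + K') * (u x ^ 2 + ‖fderiv ℝ u x‖ ^ 2)) := by
      intro x
      rw [← enorm_eq_nnnorm, ← ofReal_norm]
      apply ENNReal.ofReal_le_ofReal
      have hdu : DifferentiableAt ℝ (fun x => u x ^ 2) x := ((hu.differentiable one_ne_zero) x).pow 2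
      have hdχ : DifferentiableAt ℝ χR x := (hχRc.differentiable one_ne_zero) x
      have hmul : fderiv ℝ v x = χR x • fderiv ℝ (fun x => u x ^ 2) x
          + (u x ^ 2) • fderiv ℝ χR x := by
        rw [hvdef]
        exact fderiv_mul hdχ hdu
      have hud : DifferentiableAt ℝ u x := (hu.differentiable one_ne_zero) x
      have hpow : (fun x : Euc N => u x ^ 2) = fun x => u x * u x := by funext y; ring
      have h2 : fderiv ℝ (fun x => u x ^ 2) x = u x • fderiv ℝ u x + u x • fderiv ℝ u x := by
        rw [hpow]; exact fderiv_mul hud hud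
      have hn1 : ‖fderiv ℝ (fun x => u x ^ 2) x‖ ≤ u x ^ 2 + ‖fderiv ℝ u x‖ ^ 2 := by
        calc ‖fderiv ℝ (fun x => u x ^ 2) x‖ ≤ 2 * (|u x| * ‖fderiv ℝ u x‖) := by
              rw [h2]
              refine (norm_add_le _ _).trans ?_
              rw [norm_smul, Real.norm_eq_abs]
              linarith
          _ ≤ u x ^ 2 + ‖fderiv ℝ u x‖ ^ 2 := by
              nlinarith [sq_nonneg (|u x| - ‖fderiv ℝ u x‖), sq_abs (u x)]
      set L : Euc N →L[ℝ] Euc N := R⁻¹ • ContinuousLinearMap.id ℝ (Euc N) with hLdef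
      have hLapp : (fun y : Euc N => R⁻¹ • y) = L := by funext y; simp [hLdef]
      have hLnorm : ‖L‖ ≤ R⁻¹ := by
        rw [hLdef]
        refine (norm_smul_le R⁻¹ (ContinuousLinearMap.id ℝ (Euc N))).trans ?_
        rw [Real.norm_eq_abs, abs_of_pos (show (0:ℝ) < R⁻¹ by positivity)]
        calc R⁻¹ * ‖ContinuousLinearMap.id ℝ (Euc N)‖ ≤ R⁻¹ * 1 := by
              gcongr; exact ContinuousLinearMap.norm_id_le
          _ = R⁻¹ := mul_one _
      have hχcomp : fderiv ℝ χR x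
          = (fderiv ℝ (χ : Euc N → ℝ) (L x)).comp L := by
        have : χR = (χ : Euc N → ℝ) ∘ L := by funext y; rw [hχRdef]; simp [← hLapp]
        rw [this, fderiv_comp x ((hχc1.differentiable one_ne_zero) _) L.differentiableAt,
          L.fderiv]
      have hn2 : ‖fderiv ℝ χR x‖ ≤ K' := by
        rw [hχcomp]
        calc ‖(fderiv ℝ (χ : Euc N → ℝ) (L x)).comp L‖
            ≤ ‖fderiv ℝ (χ : Euc N → ℝ) (L x)‖ * ‖L‖ := ContinuousLinearMap.opNorm_comp_le _ _
          _ ≤ K' * R⁻¹ := by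
              apply mul_le_mul (hK' _) hLnorm (norm_nonneg _) hK'0
          _ ≤ K' * 1 := by
              gcongr
              rw [inv_le_one_iff₀]; right; linarith
          _ = K' := mul_one _
      calc ‖fderiv ℝ v x‖ ≤ χR x * ‖fderiv ℝ (fun x => u x ^ 2) x‖ + u x ^ 2 * ‖fderiv ℝ χR x‖ := by
            rw [hmul]
            refine (norm_add_le _ _).trans ?_
            rw [norm_smul, norm_smul, Real.norm_eq_abs, Real.norm_eq_abs,
              abs_of_nonneg (hχR01 x).1, abs_of_nonneg (by positivity : (0:ℝ) ≤ u x ^ 2)]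
        _ ≤ (1 + K') * (u x ^ 2 + ‖fderiv ℝ u x‖ ^ 2) := by
            have h1 := (hχR01 x).1
            have h2' := (hχR01 x).2
            have h3 : (0:ℝ) ≤ u x ^ 2 := by positivity
            have h4 : (0:ℝ) ≤ ‖fderiv ℝ u x‖ ^ 2 := by positivity
            have h5 : ‖fderiv ℝ (fun x => u x ^ 2) x‖ ≥ 0 := norm_nonneg _
            have h6 : ‖fderiv ℝ χR x‖ ≥ 0 := norm_nonneg _
            nlinarith [mul_le_mul_of_nonneg_left hn1 h1, mul_le_mul_of_nonneg_left hn2 h3]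
    -- assemble the ball bound
    have hFv : (∫⁻ x, (‖fderiv ℝ v x‖₊ : ℝ≥0∞)) ≤ ENNReal.ofReal (1 + K') * ENNReal.ofReal s := by
      calc (∫⁻ x, (‖fderiv ℝ v x‖₊ : ℝ≥0∞))
          ≤ ∫⁻ x, ENNReal.ofReal ((1 + K') * (u x ^ 2 + ‖fderiv ℝ u x‖ ^ 2)) :=
            lintegral_mono hub2
        _ = ∫⁻ x, ENNReal.ofReal (1 + K') * ENNReal.ofReal (u x ^ 2 + ‖fderiv ℝ u x‖ ^ 2) := by
            congr 1; funext x; rw [ENNReal.ofReal_mul (by positivity)]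
        _ = ENNReal.ofReal (1 + K') * ENNReal.ofReal s := by
            rw [lintegral_const_mul' _ _ ENNReal.ofReal_ne_top, hbase]
    have hVv : (∫⁻ x, (‖v x‖₊ : ℝ≥0∞)) ≤ ENNReal.ofReal s := by
      calc (∫⁻ x, (‖v x‖₊ : ℝ≥0∞))
          ≤ ∫⁻ x, ENNReal.ofReal (u x ^ 2 + ‖fderiv ℝ u x‖ ^ 2) := lintegral_mono hub1
        _ = ENNReal.ofReal s := hbase
    have hsum : (∫⁻ x, (‖fderiv ℝ v x‖₊ : ℝ≥0∞)) + (∫⁻ x, (‖v x‖₊ : ℝ≥0∞))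
        ≤ ENNReal.ofReal (2 + K') * ENNReal.ofReal s := by
      have h27 : ENNReal.ofReal (2 + K') = ENNReal.ofReal (1 + K') + 1 := by
        rw [← ENNReal.ofReal_one, ← ENNReal.ofReal_add (by positivity) zero_le_one]
        congr 1; ring
      rw [h27, add_mul, one_mul]
      exact add_le_add hFv hVv
    refine hlow.trans (key.trans ?_)
    exact mul_le_mul_right (ENNReal.rpow_le_rpow hsum hp0.le) _
  -- pass to the whole space
  have hsup : (∫⁻ x, f x) = ⨆ n : ℕ, ∫⁻ x in Metric.ball (0 : Euc N) n, f x := by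
    have hmono : Monotone (fun n : ℕ => (Metric.ball (0 : Euc N) n).indicator f) := by
      intro m n hmn
      exact Set.indicator_le_indicator_of_subset
        (Metric.ball_subset_ball (by exact_mod_cast hmn)) (fun a => zero_le)
    calc (∫⁻ x, f x) = ∫⁻ x, ⨆ n : ℕ, (Metric.ball (0 : Euc N) n).indicator f x := by
          congr 1; funext x
          refine le_antisymm ?_ (iSup_le fun n => Set.indicator_le_self _ _ x)
          obtain ⟨n, hn⟩ := exists_nat_gt ‖x‖
          refine le_iSup_of_le n ?_
          rw [Set.indicator_of_mem (by simpa [Metric.mem_ball, dist_zero_right] using hn)]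
      _ = ⨆ n : ℕ, ∫⁻ x, (Metric.ball (0 : Euc N) n).indicator f x :=
          lintegral_iSup (fun n => hfmeas.indicator measurableSet_ball) hmono
      _ = ⨆ n : ℕ, ∫⁻ x in Metric.ball (0 : Euc N) n, f x := by
          congr 1; funext n
          exact lintegral_indicator measurableSet_ball f
  have hfinal : (∫⁻ x, f x) ≤ C0 * (ENNReal.ofReal (2 + K') * ENNReal.ofReal s) ^ p := by
    rw [hsup]; exact iSup_le hball
  refine hfinal.trans_eq ?_
  rw [ENNReal.mul_rpow_of_nonneg _ _ hp0.le, ← mul_assoc]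

/-- The Nehari set is bounded away from `0` in the norm
`‖u‖ = (∫ (|∇u|² + (V+Q)u²))^{1/2}`. -/
theorem nehari_bounded_away_from_zero (N : ℕ) (hN : 1 ≤ N) (V Q : Euc N → ℝ)
    (hVcont : Continuous V) (hQsmooth : ContDiff ℝ 1 Q)
    (hVper : ∀ (x : Euc N) (k : Fin N → ℤ), V (x + intVec k) = V x)
    (hQper : ∀ (x : Euc N) (k : Fin N → ℤ), Q (x + intVec k) = Q x)
    (hQpos : 0 < ⨅ x, Q x) (hVQpos : 0 < ⨅ x, V x + Q x) :
    ∃ ρ : ℝ, 0 < ρ ∧ ∀ u : Euc N → ℝ, InNehari V Q u →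
      ρ ≤ Real.sqrt (∫ x, (‖gradient u x‖ ^ 2 + (V x + Q x) * (u x) ^ 2)) := by
  have hN0 : (0:ℝ) < N := by exact_mod_cast hN
  set α : ℝ := 1 / N with hαdef
  have hα0 : 0 < α := by positivity
  have hαN : α * N = 1 := by rw [hαdef]; field_simp
  set p : ℝ := (N+1)/N with hpdef
  have hpeq : 1 + α = p := by rw [hαdef, hpdef]; field_simp; try ring
  have hp0 : 0 < p := by positivity
  -- bounds on Q and V+Q
  obtain ⟨Mq, hMq⟩ := periodic_bound Q hQsmooth.continuous hQper
  obtain ⟨Mw, hMw⟩ := periodic_bound (fun x => V x + Q x) (hVcont.add hQsmooth.continuous)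
    (fun x k => by rw [hVper, hQper])
  obtain ⟨Mv, hMv⟩ := periodic_bound V hVcont hVper
  set q0 : ℝ := ⨅ x, Q x with hq0def
  set c0 : ℝ := ⨅ x, V x + Q x with hc0def
  have hq0le : ∀ x, q0 ≤ Q x := by
    intro x
    refine ciInf_le ⟨-Mq, ?_⟩ x
    rintro y ⟨z, rfl⟩
    have := (abs_le.mp (hMq z)).1
    linarith
  have hc0le : ∀ x, c0 ≤ V x + Q x := by
    intro x
    refine ciInf_le ⟨-Mw, ?_⟩ x
    rintro y ⟨z, rfl⟩
    have := (abs_le.mp (hMw z)).1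
    show -Mw ≤ V z + Q z
    linarith
  have hQle : ∀ x, Q x ≤ Mq := fun x => (abs_le.mp (hMq x)).2
  have hQpt : ∀ x, 0 < Q x := fun x => lt_of_lt_of_le hQpos (hq0le x)
  have hMqpos : 0 < Mq := lt_of_lt_of_le (hQpt 0) (hQle 0)
  set c1 : ℝ := min 1 c0 with hc1def
  have hc1pos : 0 < c1 := lt_min one_pos hVQpos
  have hc1le1 : c1 ≤ 1 := min_le_left _ _
  obtain ⟨C, hCfin, hC⟩ := sobolev_noncompact N hN
  set Kc : ℝ := Mq * (Real.exp α / α) with hKcdef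
  have hKcpos : 0 < Kc := by positivity
  set Dd : ℝ := max (Kc * C.toReal) 1 with hDddef
  have hDd1 : 1 ≤ Dd := le_max_right _ _
  have hDdpos : 0 < Dd := lt_of_lt_of_le one_pos hDd1
  set ρ0 : ℝ := c1 * (c1 / Dd) ^ (N:ℝ) with hρ0def
  have hρ0pos : 0 < ρ0 := by positivity
  refine ⟨Real.sqrt ρ0, Real.sqrt_pos.mpr hρ0pos, ?_⟩
  rintro u ⟨hu, hne, hint, hlog, hnehari⟩
  -- switch from gradient to fderiv
  have hgr : ∀ x, ‖gradient u x‖ = ‖fderiv ℝ u x‖ := norm_gradient_eq u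
  have hint' : Integrable (fun x => u x ^ 2 + ‖fderiv ℝ u x‖ ^ 2) volume := by
    have : (fun x => u x ^ 2 + ‖gradient u x‖ ^ 2)
        = fun x => u x ^ 2 + ‖fderiv ℝ u x‖ ^ 2 := by funext x; rw [hgr]
    rwa [this] at hint
  set s : ℝ := ∫ x, (u x ^ 2 + ‖fderiv ℝ u x‖ ^ 2) with hsdef
  -- component integrabilities
  have hmeas_u2 : AEStronglyMeasurable (fun x => u x ^ 2) volume :=
    ((hu.continuous.pow 2).aestronglyMeasurable)
  have hmeas_du2 : AEStronglyMeasurable (fun x => ‖fderiv ℝ u x‖ ^ 2) volume :=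
    (((hu.continuous_fderiv one_ne_zero).norm.pow 2).aestronglyMeasurable)
  have hu2 : Integrable (fun x => u x ^ 2) volume :=
    hint'.mono' hmeas_u2 (Filter.Eventually.of_forall fun x => by
      rw [Real.norm_eq_abs, abs_of_nonneg (by positivity)]
      exact le_add_of_nonneg_right (by positivity))
  have hdu2 : Integrable (fun x => ‖fderiv ℝ u x‖ ^ 2) volume :=
    hint'.mono' hmeas_du2 (Filter.Eventually.of_forall fun x => by
      rw [Real.norm_eq_abs, abs_of_nonneg (by positivity)]
      exact le_add_of_nonneg_left (by positivity))
  have hQu2 : Integrable (fun x => Q x * u x ^ 2) volume :=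
    hu2.bdd_mul hQsmooth.continuous.aestronglyMeasurable (Filter.Eventually.of_forall fun x => by
      rw [Real.norm_eq_abs]; exact hMq x)
  have hVu2 : Integrable (fun x => V x * u x ^ 2) volume :=
    hu2.bdd_mul hVcont.aestronglyMeasurable (Filter.Eventually.of_forall fun x => by
      rw [Real.norm_eq_abs]; exact hMv x)
  have hWu2 : Integrable (fun x => (V x + Q x) * u x ^ 2) volume :=
    hu2.bdd_mul (hVcont.add hQsmooth.continuous).aestronglyMeasurable (Filter.Eventually.of_forall fun x => by
      rw [Real.norm_eq_abs]; exact hMw x)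
  have hQlog : Integrable (fun x => Q x * (u x ^ 2 * Real.log (u x ^ 2))) volume :=
    hlog.bdd_mul hQsmooth.continuous.aestronglyMeasurable (Filter.Eventually.of_forall fun x => by
      rw [Real.norm_eq_abs]; exact hMq x)
  have hTint : Integrable (fun x => ‖fderiv ℝ u x‖ ^ 2 + (V x + Q x) * u x ^ 2) volume :=
    hdu2.add hWu2
  set T : ℝ := ∫ x, (‖fderiv ℝ u x‖ ^ 2 + (V x + Q x) * u x ^ 2) with hTdef
  -- (a) positivity of s
  have hsupp : 0 < ∫ x, u x ^ 2 := by
    rw [integral_pos_iff_support_of_nonneg (fun x => sq_nonneg (u x)) hu2]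
    have hopen : IsOpen (Function.support u) := by
      have : Function.support u = u ⁻¹' {0}ᶜ := by
        ext x; simp [Function.mem_support]
      rw [this]
      exact (isOpen_compl_singleton).preimage hu.continuous
    have hsupps : Function.support (fun x => u x ^ 2) = Function.support u := by
      ext x; simp [Function.mem_support, pow_eq_zero_iff]
    rw [hsupps]
    obtain ⟨x0, hx0⟩ := Function.ne_iff.mp hne
    exact hopen.measure_pos volume ⟨x0, hx0⟩
  have hspos : 0 < s := by
    have h1 : ∫ x, u x ^ 2 ≤ s :=
      integral_mono hu2 hint' (fun x => le_add_of_nonneg_right (by positivity))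
    linarith
  -- (b) c1 * s ≤ T
  have hlb : c1 * s ≤ T := by
    rw [hsdef, hTdef, ← integral_const_mul]
    apply integral_mono (hint'.const_mul c1) hTint
    intro x
    simp only []
    have h1 := hc0le x
    have h2 : c1 ≤ c0 := min_le_right _ _
    nlinarith [sq_nonneg (u x), norm_nonneg (fderiv ℝ u x), sq_nonneg ‖fderiv ℝ u x‖]
  -- (c) T = ∫ Q u² (log u² + 1)
  have hT2 : T = ∫ x, Q x * (u x ^ 2 * (Real.log (u x ^ 2) + 1)) := by
    have e1 : T = (∫ x, (‖fderiv ℝ u x‖ ^ 2 + V x * u x ^ 2)) + ∫ x, Q x * u x ^ 2 := by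
      have h0 : (fun x : Euc N => ‖fderiv ℝ u x‖ ^ 2 + (V x + Q x) * u x ^ 2)
          = fun x => (‖fderiv ℝ u x‖ ^ 2 + V x * u x ^ 2) + Q x * u x ^ 2 := by
        funext x; ring
      rw [hTdef, h0]
      exact integral_add (hdu2.add hVu2) hQu2
    have e2 : (∫ x, (‖fderiv ℝ u x‖ ^ 2 + V x * u x ^ 2))
        = ∫ x, Q x * (u x ^ 2 * Real.log (u x ^ 2)) := by
      have h3 : (fun x => ‖gradient u x‖ ^ 2 + V x * u x ^ 2)
          = fun x => ‖fderiv ℝ u x‖ ^ 2 + V x * u x ^ 2 := by funext x; rw [hgr]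
      have h4 : (fun x => Q x * u x ^ 2 * Real.log (u x ^ 2))
          = fun x => Q x * (u x ^ 2 * Real.log (u x ^ 2)) := by funext x; ring
      rw [← h3, ← h4]
      exact hnehari
    rw [e1, e2, ← integral_add hQlog hQu2]
    congr 1
    funext x
    ring
  -- (d),(e): T ≤ Dd * s ^ p
  have hub : T ≤ Dd * s ^ p := by
    set g : Euc N → ℝ := fun x => Kc * (u x ^ 2) ^ p with hgdef
    have hgnn : ∀ x, 0 ≤ g x := fun x => by positivity
    have hgmeas : AEStronglyMeasurable g volume := by
      apply Continuous.aestronglyMeasurable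
      apply continuous_const.mul
      exact (hu.continuous.pow 2).rpow_const (fun x => Or.inr hp0.le)
    have hptwise : ∀ x, Q x * (u x ^ 2 * (Real.log (u x ^ 2) + 1)) ≤ g x := by
      intro x
      set t : ℝ := u x ^ 2 with htdef
      have ht : 0 ≤ t := sq_nonneg _
      have hkey : t * (Real.log t + 1) ≤ (Real.exp α / α) * t ^ p := by
        rw [← hpeq]; exact t_log_le hα0 t ht
      rcases le_or_gt (t * (Real.log t + 1)) 0 with h | h
      · have h1 : Q x * (t * (Real.log t + 1)) ≤ 0 :=
          mul_nonpos_of_nonneg_of_nonpos (hQpt x).le h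
        have h2 : 0 ≤ g x := hgnn x
        calc Q x * (t * (Real.log t + 1)) ≤ 0 := h1
          _ ≤ g x := h2
      · calc Q x * (t * (Real.log t + 1)) ≤ Mq * (t * (Real.log t + 1)) :=
            mul_le_mul_of_nonneg_right (hQle x) h.le
          _ ≤ Mq * ((Real.exp α / α) * t ^ p) :=
            mul_le_mul_of_nonneg_left hkey hMqpos.le
          _ = g x := by rw [hgdef, hKcdef]; ring
    -- lintegral bound on ∫ (u²)^p
    have hkey2 := hC u hu hint'
    have hPfin : (∫⁻ x, (ENNReal.ofReal (u x ^ 2)) ^ p) ≤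
        C * (ENNReal.ofReal s) ^ p := hkey2
    have hBndfin : C * (ENNReal.ofReal s) ^ p ≠ ∞ :=
      ENNReal.mul_ne_top hCfin (ENNReal.rpow_ne_top_of_nonneg hp0.le ENNReal.ofReal_ne_top)
    have hgint : Integrable g volume := by
      refine ⟨hgmeas, ?_⟩
      rw [hasFiniteIntegral_iff_norm]
      have heq : ∀ x, ENNReal.ofReal ‖g x‖ = ENNReal.ofReal Kc * (ENNReal.ofReal (u x ^ 2)) ^ p := by
        intro x
        rw [Real.norm_eq_abs, abs_of_nonneg (hgnn x), hgdef]
        rw [ENNReal.ofReal_mul hKcpos.le, ENNReal.ofReal_rpow_of_nonneg (sq_nonneg _) hp0.le]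
      calc (∫⁻ x, ENNReal.ofReal ‖g x‖)
          = ENNReal.ofReal Kc * ∫⁻ x, (ENNReal.ofReal (u x ^ 2)) ^ p := by
            simp_rw [heq]
            rw [lintegral_const_mul' _ _ ENNReal.ofReal_ne_top]
        _ ≤ ENNReal.ofReal Kc * (C * (ENNReal.ofReal s) ^ p) :=
            mul_le_mul_right hPfin _
        _ < ∞ := ENNReal.mul_lt_top ENNReal.ofReal_lt_top hBndfin.lt_top
    have hTleg : T ≤ ∫ x, g x := by
      rw [hT2]
      exact integral_mono (by
        have : Integrable (fun x => Q x * (u x ^ 2 * Real.log (u x ^ 2)) + Q x * u x ^ 2) volume :=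
          hQlog.add hQu2
        have heq : (fun x => Q x * (u x ^ 2 * (Real.log (u x ^ 2) + 1)))
            = fun x => Q x * (u x ^ 2 * Real.log (u x ^ 2)) + Q x * u x ^ 2 := by
          funext x; ring
        rwa [heq]) hgint hptwise
    have hgle : ∫ x, g x ≤ Kc * C.toReal * s ^ p := by
      have h1 : ENNReal.ofReal (∫ x, g x) = ∫⁻ x, ENNReal.ofReal (g x) :=
        ofReal_integral_eq_lintegral_ofReal hgint (Filter.Eventually.of_forall hgnn)
      have h2 : (∫⁻ x, ENNReal.ofReal (g x)) ≤ ENNReal.ofReal Kc * (C * (ENNReal.ofReal s) ^ p) := by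
        calc (∫⁻ x, ENNReal.ofReal (g x))
            = ENNReal.ofReal Kc * ∫⁻ x, (ENNReal.ofReal (u x ^ 2)) ^ p := by
              have heq : ∀ x, ENNReal.ofReal (g x)
                  = ENNReal.ofReal Kc * (ENNReal.ofReal (u x ^ 2)) ^ p := by
                intro x
                rw [hgdef, ENNReal.ofReal_mul hKcpos.le,
                  ENNReal.ofReal_rpow_of_nonneg (sq_nonneg _) hp0.le]
              simp_rw [heq]
              rw [lintegral_const_mul' _ _ ENNReal.ofReal_ne_top]
          _ ≤ _ := mul_le_mul_right hPfin _
      have h3 : ENNReal.ofReal (∫ x, g x) ≤ ENNReal.ofReal Kc * (C * (ENNReal.ofReal s) ^ p) :=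
        h1.le.trans h2
      have h4 : (ENNReal.ofReal Kc * (C * (ENNReal.ofReal s) ^ p)).toReal
          = Kc * C.toReal * s ^ p := by
        rw [ENNReal.toReal_mul, ENNReal.toReal_mul, ENNReal.toReal_ofReal hKcpos.le,
          ← ENNReal.toReal_rpow, ENNReal.toReal_ofReal hspos.le]
        ring
      have h5 := ENNReal.toReal_mono (ENNReal.mul_ne_top ENNReal.ofReal_ne_top hBndfin) h3
      rwa [ENNReal.toReal_ofReal (integral_nonneg hgnn), h4] at h5
    calc T ≤ ∫ x, g x := hTleg
      _ ≤ Kc * C.toReal * s ^ p := hgle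
      _ ≤ Dd * s ^ p := by
          apply mul_le_mul_of_nonneg_right (le_max_left _ _)
          positivity
  -- (f) conclude
  have hslb : (c1 / Dd) ^ (N:ℝ) ≤ s := by
    have h1 : c1 * s ≤ Dd * (s * s ^ α) := by
      have : s ^ p = s * s ^ α := by
        rw [← hpeq, Real.rpow_add hspos, Real.rpow_one]
      rw [← this]; exact hlb.trans hub
    have h2 : c1 ≤ Dd * s ^ α := by
      nlinarith [h1, hspos, Real.rpow_pos_of_pos hspos α]
    have h3 : c1 / Dd ≤ s ^ α := by
      rw [div_le_iff₀ hDdpos]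
      linarith [h2]
    calc (c1 / Dd) ^ (N:ℝ) ≤ (s ^ α) ^ (N:ℝ) :=
        Real.rpow_le_rpow (by positivity) h3 (by positivity)
      _ = s ^ (α * N) := by rw [← Real.rpow_mul hspos.le]
      _ = s := by rw [hαN, Real.rpow_one]
  have hTlb : ρ0 ≤ T := by
    calc ρ0 = c1 * (c1 / Dd) ^ (N:ℝ) := hρ0def
      _ ≤ c1 * s := mul_le_mul_of_nonneg_left hslb hc1pos.le
      _ ≤ T := hlb
  have hgoal : (∫ x, (‖gradient u x‖ ^ 2 + (V x + Q x) * (u x) ^ 2)) = T := by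
    rw [hTdef]; congr 1; funext x; rw [hgr]
  rw [hgoal]
  exact Real.sqrt_le_sqrt hTlb
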